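/- Let ε ∈ [0, 1/2] and c ∈ ℝ. Suppose W : ℝ × ℝ² → ℝ is twice continuously differentiable on ℝ × closure(Ω) and ℓ-periodic in x, W vanishes on ℝ × ∂Ω, W and its first partial derivatives are square integrable on ℝ × Ω_p and tend to 0 uniformly in (x,z) as |s| → ∞, and −c ∂_s W − L_ε W = 0 holds at every point of ℝ × Ω. Then W is identically zero on ℝ × closure(Ω). -/

import Mathlib

open MeasureTheory Set

/-- Directional derivative of `f : ℝ × ℝ × ℝ → ℝ` (coordinates `(s, x, z)`)
in the direction `v`. -/
noncomputable def Dv (f : ℝ × ℝ × ℝ → ℝ) (v : ℝ × ℝ × ℝ) : ℝ × ℝ × ℝ → ℝ :=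
  fun p => fderiv ℝ f p v

/-- The regularized moving-frame operator `L_ε = (∂_x + ∂_s)² + ∂_z² + ε ∂_s²`. -/
noncomputable def Leps (ε : ℝ) (f : ℝ × ℝ × ℝ → ℝ) : ℝ × ℝ × ℝ → ℝ :=
  fun p => Dv (Dv f (1, 1, 0)) (1, 1, 0) p + Dv (Dv f (0, 0, 1)) (0, 0, 1) p
    + ε * Dv (Dv f (1, 0, 0)) (1, 0, 0) p

open Filter in
lemma second_deriv_nonneg_of_isLocalMin {g : ℝ → ℝ} (hg : ContDiffAt ℝ 2 g 0)
    (hmin : IsLocalMin g 0) : 0 ≤ deriv (deriv g) 0 := by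
  by_contra hneg
  push_neg at hneg
  -- C² on a neighborhood
  obtain ⟨U, hUnhds, hUg⟩ := hg.contDiffOn le_rfl (by simp)
  obtain ⟨V, hVU, hVopen, hV0⟩ := mem_nhds_iff.1 hUnhds
  have hgV : ContDiffOn ℝ 2 g V := hUg.mono hVU
  have hdgV : ContDiffOn ℝ 1 (deriv g) V := hgV.deriv_of_isOpen hVopen (by norm_num)
  have hdg0 : deriv g 0 = 0 := hmin.deriv_eq_zero
  have hd2 : HasDerivAt (deriv g) (deriv (deriv g) 0) 0 := by
    have : DifferentiableAt ℝ (deriv g) 0 :=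
      ((hdgV.contDiffAt (hVopen.mem_nhds hV0)).differentiableAt one_ne_zero)
    exact this.hasDerivAt
  have hslope : Tendsto (slope (deriv g) 0) (nhdsWithin 0 {(0:ℝ)}ᶜ) (nhds (deriv (deriv g) 0)) :=
    hasDerivAt_iff_tendsto_slope.1 hd2
  have hev : ∀ᶠ t in nhdsWithin (0:ℝ) {(0:ℝ)}ᶜ, slope (deriv g) 0 t < 0 :=
    hslope.eventually_lt_const hneg
  have hev' : ∀ᶠ t in nhdsWithin (0:ℝ) (Ioi 0), deriv g t < 0 := by
    have hmono : nhdsWithin (0:ℝ) (Ioi 0) ≤ nhdsWithin (0:ℝ) {(0:ℝ)}ᶜ :=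
      nhdsWithin_mono 0 (fun t ht => ne_of_gt ht)
    filter_upwards [hmono hev, self_mem_nhdsWithin] with t hst ht
    have hts : slope (deriv g) 0 t = deriv g t / t := by
      simp [slope_def_field, hdg0]
    rw [hts] at hst
    rcases div_neg_iff.1 hst with ⟨_, h2⟩ | ⟨h1, _⟩
    · exact absurd h2 (not_lt.2 (le_of_lt ht))
    · exact h1
  obtain ⟨δ1, hδ1, hδ1sub⟩ := mem_nhdsGT_iff_exists_Ioo_subset.1 hev'
  obtain ⟨δ2, hδ2pos, hδ2sub⟩ := Metric.mem_nhds_iff.1 (hVopen.mem_nhds hV0)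
  obtain ⟨δ3, hδ3pos, hδ3⟩ := Metric.eventually_nhds_iff.1 hmin
  set t1 : ℝ := min (min (δ1/2) (δ2/2)) (δ3/2) with ht1def
  have hδ1pos : 0 < δ1 := hδ1
  have ht1pos : 0 < t1 := by positivity
  have ht1lt1 : t1 < δ1 := lt_of_le_of_lt (le_trans (min_le_left _ _) (min_le_left _ _)) (by linarith)
  have ht1lt2 : t1 < δ2 := lt_of_le_of_lt (le_trans (min_le_left _ _) (min_le_right _ _)) (by linarith)
  have ht1lt3 : t1 < δ3 := lt_of_le_of_lt (min_le_right _ _) (by linarith)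
  have hIccV : Icc (0:ℝ) t1 ⊆ V := by
    intro t ⟨h0, h1⟩
    apply hδ2sub
    simp only [Metric.mem_ball, Real.dist_eq, sub_zero]
    rw [abs_of_nonneg h0]; linarith
  have hanti : StrictAntiOn g (Icc (0:ℝ) t1) := by
    apply strictAntiOn_of_deriv_neg (convex_Icc _ _)
    · exact (hgV.continuousOn.mono hIccV)
    · intro x hx
      rw [interior_Icc] at hx
      exact hδ1sub ⟨hx.1, lt_trans hx.2 ht1lt1⟩
  have h1 : g t1 < g 0 := hanti ⟨le_rfl, le_of_lt ht1pos⟩ ⟨le_of_lt ht1pos, le_rfl⟩ ht1pos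
  have h2 : g 0 ≤ g t1 := by
    apply hδ3
    simp only [Real.dist_eq, sub_zero]
    rw [abs_of_nonneg (le_of_lt ht1pos)]; linarith
  linarith

lemma dir_min {G : ℝ × ℝ × ℝ → ℝ} {p0 : ℝ × ℝ × ℝ} (hG : ContDiffAt ℝ 2 G p0)
    (hmin : IsLocalMin G p0) (v : ℝ × ℝ × ℝ) :
    Dv G v p0 = 0 ∧ 0 ≤ Dv (Dv G v) v p0 := by
  set L : ℝ → ℝ × ℝ × ℝ := fun t => p0 + t • v with hLdef
  have hL0 : L 0 = p0 := by simp [hLdef]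
  have hLd : ∀ t : ℝ, HasDerivAt L v t := by
    intro t
    have h1 : HasDerivAt (fun y : ℝ => y • v) ((1:ℝ) • v) t := (hasDerivAt_id t).smul_const v
    have h2 := h1.const_add p0
    simp only [one_smul] at h2
    exact h2
  have hLcd : ContDiff ℝ 2 L := contDiff_const.add (contDiff_id.smul contDiff_const)
  set g : ℝ → ℝ := G ∘ L with hgdef
  have hgC : ContDiffAt ℝ 2 g 0 := by
    refine ContDiffAt.comp 0 ?_ hLcd.contDiffAt
    rwa [hL0]
  have hgmin : IsLocalMin g 0 := by
    refine IsLocalMin.comp_continuous ?_ hLcd.continuous.continuousAt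
    rwa [hL0]
  obtain ⟨U, hUnhds, hUG⟩ := hG.contDiffOn le_rfl (by simp)
  obtain ⟨V, hVU, hVopen, hpV⟩ := mem_nhds_iff.1 hUnhds
  have hGV : ContDiffOn ℝ 2 G V := hUG.mono hVU
  have hWd : ∀ p ∈ V, DifferentiableAt ℝ G p := fun p hp =>
    (hGV.contDiffAt (hVopen.mem_nhds hp)).differentiableAt (by norm_num)
  set T : Set ℝ := L ⁻¹' V with hTdef
  have hTopen : IsOpen T := hVopen.preimage hLcd.continuous
  have h0T : (0:ℝ) ∈ T := by simp [hTdef, hL0, hpV]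
  have hderiv_g : ∀ t ∈ T, HasDerivAt g (Dv G v (L t)) t := by
    intro t ht
    exact (hWd _ ht).hasFDerivAt.comp_hasDerivAt t (hLd t)
  have hdg0 : deriv g 0 = Dv G v p0 := by
    have := (hderiv_g 0 h0T).deriv
    rwa [hL0] at this
  have hfirst : Dv G v p0 = 0 := by rw [← hdg0]; exact hgmin.deriv_eq_zero
  -- second derivative
  have hev : deriv g =ᶠ[nhds (0:ℝ)] fun t => Dv G v (L t) := by
    filter_upwards [hTopen.mem_nhds h0T] with t ht
    exact (hderiv_g t ht).deriv
  have hfd : ContDiffOn ℝ 1 (fderiv ℝ G) V := hGV.fderiv_of_isOpen hVopen (by norm_num)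
  have hDvdiff : DifferentiableAt ℝ (Dv G v) p0 := by
    have h1 : DifferentiableAt ℝ (fderiv ℝ G) p0 :=
      (hfd.contDiffAt (hVopen.mem_nhds hpV)).differentiableAt one_ne_zero
    exact h1.clm_apply (differentiableAt_const v)
  have hd2 : HasDerivAt (fun t => Dv G v (L t)) (Dv (Dv G v) v p0) 0 := by
    have h1 : HasFDerivAt (Dv G v) (fderiv ℝ (Dv G v) p0) (L 0) := by
      rw [hL0]; exact hDvdiff.hasFDerivAt
    exact h1.comp_hasDerivAt 0 (hLd 0)
  have hkey : deriv (deriv g) 0 = Dv (Dv G v) v p0 := by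
    rw [hev.deriv_eq, hd2.deriv]
  refine ⟨hfirst, ?_⟩
  rw [← hkey]
  exact second_deriv_nonneg_of_isLocalMin hgC hgmin


set_option maxHeartbeats 2000000 in
lemma key (lam ℓ : ℝ) (hlam : 0 < lam) (hℓ : 0 < ℓ)
    (Ω : Set (ℝ × ℝ)) (hΩopen : IsOpen Ω)
    (hΩsub : Ω ⊆ (univ : Set ℝ) ×ˢ Ioo (-lam) lam)
    (hΩper : ∀ q : ℝ × ℝ, q ∈ Ω ↔ (q.1 + ℓ, q.2) ∈ Ω)
    (ε c : ℝ) (hε : 0 ≤ ε)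
    (W : ℝ × ℝ × ℝ → ℝ)
    (hWreg : ContDiffOn ℝ 2 W ((univ : Set ℝ) ×ˢ closure Ω))
    (hWper : ∀ s x z : ℝ, W (s, x + ℓ, z) = W (s, x, z))
    (hWbd : ∀ s : ℝ, ∀ q ∈ frontier Ω, W (s, q.1, q.2) = 0)
    (hWdecay : ∀ δ : ℝ, 0 < δ → ∃ R : ℝ, ∀ s : ℝ, R ≤ |s| →
      ∀ q ∈ closure Ω, |W (s, q.1, q.2)| ≤ δ)
    (hpde : ∀ s : ℝ, ∀ q ∈ Ω,
      -c * Dv W (1, 0, 0) (s, q.1, q.2) - Leps ε W (s, q.1, q.2) = 0) :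
    ∀ s : ℝ, ∀ q ∈ closure Ω, W (s, q.1, q.2) ≤ 0 := by
  by_contra hcon
  push_neg at hcon
  obtain ⟨s₀, q₀, hq₀, hWpos⟩ := hcon
  set γ : ℝ := (2 * lam)⁻¹ with hγdef
  have hγpos : 0 < γ := by rw [hγdef]; positivity
  set m : ℝ := Real.cos (1 / 2) with hmdef
  have hπ := Real.pi_gt_three
  have hmpos : 0 < m := Real.cos_pos_of_mem_Ioo ⟨by norm_num; linarith, by norm_num; linarith⟩
  have hψ_ge : ∀ z ∈ Icc (-lam) lam, m ≤ Real.cos (γ * z) := by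
    intro z hz
    have habs : |γ * z| ≤ 1 / 2 := by
      rw [abs_mul, abs_of_pos hγpos]
      have : |z| ≤ lam := abs_le.2 ⟨hz.1, hz.2⟩
      calc γ * |z| ≤ γ * lam := by nlinarith
        _ = 1 / 2 := by rw [hγdef]; field_simp; try ring
    calc m ≤ Real.cos |γ * z| :=
          Real.cos_le_cos_of_nonneg_of_le_pi (abs_nonneg _) (by linarith) habs
      _ = Real.cos (γ * z) := Real.cos_abs _
  have hψpos : ∀ z ∈ Icc (-lam) lam, 0 < Real.cos (γ * z) :=
    fun z hz => lt_of_lt_of_le hmpos (hψ_ge z hz)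
  -- closure facts
  have hclsub : closure Ω ⊆ (univ : Set ℝ) ×ˢ Icc (-lam) lam := by
    have h1 := closure_mono hΩsub
    rwa [closure_prod_eq, closure_univ, closure_Ioo (by linarith : -lam ≠ lam)] at h1
  have hzIcc : ∀ q ∈ closure Ω, q.2 ∈ Icc (-lam) lam := fun q hq => (hclsub hq).2
  have hclper : ∀ q : ℝ × ℝ, q ∈ closure Ω ↔ (q.1 + ℓ, q.2) ∈ closure Ω := by
    set e : (ℝ × ℝ) ≃ₜ (ℝ × ℝ) := (Homeomorph.addRight ℓ).prodCongr (Homeomorph.refl ℝ) with hedef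
    have h1 : e ⁻¹' Ω = Ω := Set.ext fun q => (hΩper q).symm
    have h2 : e ⁻¹' closure Ω = closure Ω := by rw [e.preimage_closure, h1]
    intro q
    constructor
    · intro h
      have : q ∈ e ⁻¹' closure Ω := h2.symm ▸ h
      exact this
    · intro h
      have : q ∈ e ⁻¹' closure Ω := h
      rwa [h2] at this
  have hclper' : ∀ x z : ℝ, ((x, z) : ℝ × ℝ) ∈ closure Ω ↔ (x + ℓ, z) ∈ closure Ω :=
    fun x z => hclper (x, z)
  have hclperN : ∀ k : ℕ, ∀ x z : ℝ,
      ((x, z) : ℝ × ℝ) ∈ closure Ω ↔ (x + (k : ℝ) * ℓ, z) ∈ closure Ω := by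
    intro k
    induction k with
    | zero =>
      intro x z
      have he : x + ((0 : ℕ) : ℝ) * ℓ = x := by push_cast; ring
      rw [he]
    | succ i ih =>
      intro x z
      have he : x + ((i + 1 : ℕ) : ℝ) * ℓ = x + (i : ℝ) * ℓ + ℓ := by push_cast; ring
      rw [he]
      exact (ih x z).trans (hclper' (x + (i : ℝ) * ℓ) z)
  have hclperZ : ∀ n : ℤ, ∀ x z : ℝ,
      ((x, z) : ℝ × ℝ) ∈ closure Ω ↔ (x + (n : ℝ) * ℓ, z) ∈ closure Ω := by
    intro n x z
    rcases n with k | k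
    · have he : ((Int.ofNat k : ℤ) : ℝ) = (k : ℝ) := by simp
      rw [he]
      exact hclperN k x z
    · have h1 := hclperN (k + 1) (x + ((Int.negSucc k : ℤ) : ℝ) * ℓ) z
      have he : x + ((Int.negSucc k : ℤ) : ℝ) * ℓ + ((k + 1 : ℕ) : ℝ) * ℓ = x := by
        push_cast [Int.cast_negSucc]
        ring
      rw [he] at h1
      exact h1.symm
  have hWperN : ∀ k : ℕ, ∀ s x z : ℝ, W (s, x + (k : ℝ) * ℓ, z) = W (s, x, z) := by
    intro k
    induction k with
    | zero =>
      intro s x z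
      have he : x + ((0 : ℕ) : ℝ) * ℓ = x := by push_cast; ring
      rw [he]
    | succ i ih =>
      intro s x z
      have he : x + ((i + 1 : ℕ) : ℝ) * ℓ = x + (i : ℝ) * ℓ + ℓ := by push_cast; ring
      rw [he, hWper s (x + (i : ℝ) * ℓ) z]
      exact ih s x z
  have hWperZ : ∀ n : ℤ, ∀ s x z : ℝ, W (s, x + (n : ℝ) * ℓ, z) = W (s, x, z) := by
    intro n s x z
    rcases n with k | k
    · have he : ((Int.ofNat k : ℤ) : ℝ) = (k : ℝ) := by simp
      rw [he]
      exact hWperN k s x z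
    · have h1 := hWperN (k + 1) s (x + ((Int.negSucc k : ℤ) : ℝ) * ℓ) z
      have he : x + ((Int.negSucc k : ℤ) : ℝ) * ℓ + ((k + 1 : ℕ) : ℝ) * ℓ = x := by
        push_cast [Int.cast_negSucc]
        ring
      rw [he] at h1
      exact h1.symm
  have hred : ∀ x : ℝ, ∃ n : ℤ, 0 ≤ x + (n : ℝ) * ℓ ∧ x + (n : ℝ) * ℓ < ℓ := by
    intro x
    refine ⟨-⌊x / ℓ⌋, ?_, ?_⟩
    · have := Int.sub_floor_div_mul_nonneg x hℓ
      push_cast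
      linarith
    · have := Int.sub_floor_div_mul_lt x hℓ
      push_cast
      linarith
  -- the weighted function u
  set u : ℝ × ℝ × ℝ → ℝ := fun p => W p / Real.cos (γ * p.2.2) with hudef
  have hapos : 0 < u (s₀, q₀.1, q₀.2) := by
    rw [hudef]
    exact div_pos hWpos (hψpos _ (hzIcc q₀ hq₀))
  set a : ℝ := u (s₀, q₀.1, q₀.2) with hadef
  obtain ⟨R₀, hR₀⟩ := hWdecay (a * m / 2) (by positivity)
  set R' : ℝ := max R₀ |s₀| with hR'def
  set K : Set (ℝ × ℝ × ℝ) :=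
    Icc (-R') R' ×ˢ (closure Ω ∩ Icc (0 : ℝ) ℓ ×ˢ Icc (-lam) lam) with hKdef
  have hKcomp : IsCompact K :=
    isCompact_Icc.prod ((isCompact_Icc.prod isCompact_Icc).inter_left isClosed_closure)
  set D : Set (ℝ × ℝ × ℝ) := (univ : Set ℝ) ×ˢ closure Ω with hDdef
  have hDmem : ∀ p : ℝ × ℝ × ℝ, p ∈ D ↔ p.2 ∈ closure Ω := by
    intro p; simp [hDdef]
  have hKD : K ⊆ D := by
    intro p hp
    exact (hDmem p).2 hp.2.1
  have hWcont : ContinuousOn W D := hWreg.continuousOn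
  have hucont : ContinuousOn u D := by
    rw [hudef]
    refine hWcont.div ?_ ?_
    · exact (Real.continuous_cos.comp (continuous_const.mul
        (continuous_snd.comp continuous_snd))).continuousOn
    · intro p hp
      exact ne_of_gt (hψpos _ (hzIcc _ ((hDmem p).1 hp)))
  -- translated witness
  obtain ⟨n₀, hn₀0, hn₀1⟩ := hred q₀.1
  have hs₀R : s₀ ∈ Icc (-R') R' := by
    have : |s₀| ≤ R' := le_max_right _ _
    exact abs_le.1 this
  have hx₀cl : (q₀.1 + (n₀ : ℝ) * ℓ, q₀.2) ∈ closure Ω := (hclperZ n₀ q₀.1 q₀.2).1 hq₀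
  have hpstarK : (s₀, q₀.1 + (n₀ : ℝ) * ℓ, q₀.2) ∈ K := by
    refine ⟨hs₀R, hx₀cl, ⟨⟨hn₀0, le_of_lt hn₀1⟩, hzIcc (q₀.1 + (n₀ : ℝ) * ℓ, q₀.2) hx₀cl⟩⟩
  have hustar : u (s₀, q₀.1 + (n₀ : ℝ) * ℓ, q₀.2) = a := by
    rw [hadef, hudef]
    simp only
    rw [hWperZ n₀ s₀ q₀.1 q₀.2]
  obtain ⟨p0, hp0K, hp0max⟩ := hKcomp.exists_isMaxOn ⟨_, hpstarK⟩ (hucont.mono hKD)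
  set M : ℝ := u p0 with hMdef
  have hMa : a ≤ M := by
    have := isMaxOn_iff.1 hp0max _ hpstarK
    rwa [hustar] at this
  have hMpos : 0 < M := lt_of_lt_of_le hapos hMa
  -- global bound
  have hglob : ∀ p : ℝ × ℝ × ℝ, p.2 ∈ closure Ω → u p ≤ M := by
    intro p hp
    obtain ⟨n, hn0, hn1⟩ := hred p.2.1
    have hp'cl : (p.2.1 + (n : ℝ) * ℓ, p.2.2) ∈ closure Ω := (hclperZ n p.2.1 p.2.2).1 hp
    have hueq : u (p.1, p.2.1 + (n : ℝ) * ℓ, p.2.2) = u p := by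
      rw [hudef]
      simp only
      rw [hWperZ n p.1 p.2.1 p.2.2]
    by_cases hcase : |p.1| ≤ R'
    · have hp'K : (p.1, p.2.1 + (n : ℝ) * ℓ, p.2.2) ∈ K :=
        ⟨abs_le.1 hcase, hp'cl, ⟨⟨hn0, le_of_lt hn1⟩, hzIcc (p.2.1 + (n : ℝ) * ℓ, p.2.2) hp'cl⟩⟩
      have := isMaxOn_iff.1 hp0max _ hp'K
      rwa [hueq] at this
    · push_neg at hcase
      have hR : R₀ ≤ |p.1| := le_trans (le_max_left _ _) (le_of_lt hcase)
      have hWb := hR₀ p.1 hR (p.2.1 + (n : ℝ) * ℓ, p.2.2) hp'cl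
      have hψz : m ≤ Real.cos (γ * p.2.2) := hψ_ge _ (hzIcc (p.2.1 + (n : ℝ) * ℓ, p.2.2) hp'cl)
      have hψzpos : 0 < Real.cos (γ * p.2.2) := lt_of_lt_of_le hmpos hψz
      have hub : u (p.1, p.2.1 + (n : ℝ) * ℓ, p.2.2) ≤ a * m / 2 / m := by
        rw [hudef]
        simp only
        refine div_le_div₀ (by positivity) ?_ hmpos hψz
        calc W (p.1, p.2.1 + (n : ℝ) * ℓ, p.2.2)
            ≤ |W (p.1, p.2.1 + (n : ℝ) * ℓ, p.2.2)| := le_abs_self _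
          _ ≤ a * m / 2 := hWb
      have heq : a * m / 2 / m = a / 2 := by field_simp [hmpos.ne']
      rw [hueq] at hub
      have h3 : u p ≤ a / 2 := hub.trans_eq heq
      linarith
  -- pointwise comparison
  have hWle : ∀ p : ℝ × ℝ × ℝ, p.2 ∈ closure Ω → W p ≤ M * Real.cos (γ * p.2.2) := by
    intro p hp
    have h1 := hglob p hp
    rw [hudef] at h1
    exact (div_le_iff₀ (hψpos _ (hzIcc _ hp))).1 h1
  have hp0cl : p0.2 ∈ closure Ω := hp0K.2.1
  have hψ0pos : 0 < Real.cos (γ * p0.2.2) := hψpos _ (hzIcc _ hp0cl)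
  have hWp0 : W p0 = M * Real.cos (γ * p0.2.2) := by
    have h1 : u p0 = M := hMdef.symm
    rw [hudef] at h1
    exact (div_eq_iff (ne_of_gt hψ0pos)).1 h1
  have hp0Ω : p0.2 ∈ Ω := by
    by_contra h
    have hfr : p0.2 ∈ frontier Ω :=
      ⟨hp0cl, fun hint => h (interior_subset hint)⟩
    have h0 := hWbd p0.1 p0.2 hfr
    have h0' : W p0 = 0 := by
      have : (p0.1, p0.2.1, p0.2.2) = p0 := by simp
      rwa [this] at h0
    nlinarith
  set U0 : Set (ℝ × ℝ × ℝ) := {p : ℝ × ℝ × ℝ | p.2 ∈ Ω} with hU0def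
  have hU0open : IsOpen U0 := hΩopen.preimage continuous_snd
  have hp0U0 : p0 ∈ U0 := hp0Ω
  have hU0D : U0 ⊆ D := fun p hp => (hDmem p).2 (subset_closure hp)
  -- local min of G
  have hGmin : IsLocalMin (fun p : ℝ × ℝ × ℝ => M * Real.cos (γ * p.2.2) - W p) p0 := by
    have h0 : M * Real.cos (γ * p0.2.2) - W p0 = 0 := by rw [hWp0]; ring
    filter_upwards [hU0open.mem_nhds hp0U0] with p hp
    have := hWle p (subset_closure hp)
    linarith
  have hWU0 : ContDiffOn ℝ 2 W U0 := hWreg.mono hU0D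
  have hWC2 : ContDiffAt ℝ 2 W p0 :=
    hWU0.contDiffAt (hU0open.mem_nhds hp0U0)
  have hhC : ContDiff ℝ 2 (fun p : ℝ × ℝ × ℝ => M * Real.cos (γ * p.2.2)) :=
    contDiff_const.mul (Real.contDiff_cos.comp
      (contDiff_const.mul (contDiff_snd.comp contDiff_snd)))
  have hGC : ContDiffAt ℝ 2 (fun p : ℝ × ℝ × ℝ => M * Real.cos (γ * p.2.2) - W p) p0 :=
    hhC.contDiffAt.sub hWC2
  -- directional derivative machinery
  have hDsc : ∀ (φ : ℝ → ℝ) (φ' : ℝ) (p v : ℝ × ℝ × ℝ), HasDerivAt φ φ' p.2.2 →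
      Dv (fun q : ℝ × ℝ × ℝ => φ q.2.2) v p = φ' * v.2.2 := by
    intro φ φ' p v hφ
    have hproj : HasFDerivAt (fun q : ℝ × ℝ × ℝ => q.2.2)
        ((ContinuousLinearMap.snd ℝ ℝ ℝ).comp (ContinuousLinearMap.snd ℝ ℝ (ℝ × ℝ))) p :=
      ((ContinuousLinearMap.snd ℝ ℝ ℝ).comp (ContinuousLinearMap.snd ℝ ℝ (ℝ × ℝ))).hasFDerivAt
    have h2 : HasFDerivAt (fun q : ℝ × ℝ × ℝ => φ q.2.2)
        (φ' • (ContinuousLinearMap.snd ℝ ℝ ℝ).comp (ContinuousLinearMap.snd ℝ ℝ (ℝ × ℝ))) p :=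
      hφ.comp_hasFDerivAt p hproj
    show fderiv ℝ (fun q : ℝ × ℝ × ℝ => φ q.2.2) p v = φ' * v.2.2
    rw [h2.fderiv]
    simp [smul_eq_mul]
  have hlin : ∀ z : ℝ, HasDerivAt (fun z : ℝ => γ * z) γ z := by
    intro z
    simpa using (hasDerivAt_id z).const_mul γ
  have hφ1 : ∀ z : ℝ, HasDerivAt (fun z : ℝ => M * Real.cos (γ * z))
      (M * (-Real.sin (γ * z) * γ)) z := by
    intro z
    exact ((Real.hasDerivAt_cos (γ * z)).comp z (hlin z)).const_mul M
  have hφ2 : ∀ z : ℝ, HasDerivAt (fun z : ℝ => -(M * γ) * Real.sin (γ * z))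
      (-(M * γ) * (Real.cos (γ * z) * γ)) z := by
    intro z
    exact ((Real.hasDerivAt_sin (γ * z)).comp z (hlin z)).const_mul (-(M * γ))
  have hDh : ∀ (v : ℝ × ℝ × ℝ) (p : ℝ × ℝ × ℝ),
      Dv (fun q : ℝ × ℝ × ℝ => M * Real.cos (γ * q.2.2)) v p
        = (-(M * γ) * Real.sin (γ * p.2.2)) * v.2.2 := by
    intro v p
    have h1 := hDsc (fun z : ℝ => M * Real.cos (γ * z)) (M * (-Real.sin (γ * p.2.2) * γ)) p v
      (hφ1 p.2.2)
    exact h1.trans (by ring)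
  have hDη : ∀ (v : ℝ × ℝ × ℝ) (p : ℝ × ℝ × ℝ),
      Dv (fun q : ℝ × ℝ × ℝ => -(M * γ) * Real.sin (γ * q.2.2)) v p
        = (-(M * γ) * (Real.cos (γ * p.2.2) * γ)) * v.2.2 := by
    intro v p
    exact hDsc (fun z : ℝ => -(M * γ) * Real.sin (γ * z))
      (-(M * γ) * (Real.cos (γ * p.2.2) * γ)) p v (hφ2 p.2.2)
  have hWdiffat : ∀ p ∈ U0, DifferentiableAt ℝ W p := fun p hp =>
    (hWU0.contDiffAt (hU0open.mem_nhds hp)).differentiableAt (by norm_num)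
  have hGv : ∀ (v : ℝ × ℝ × ℝ), ∀ p ∈ U0,
      Dv (fun q : ℝ × ℝ × ℝ => M * Real.cos (γ * q.2.2) - W q) v p
        = Dv (fun q : ℝ × ℝ × ℝ => M * Real.cos (γ * q.2.2)) v p - Dv W v p := by
    intro v p hp
    rw [Dv, fderiv_fun_sub (hhC.differentiable (by norm_num)).differentiableAt (hWdiffat p hp)]
    simp [Dv]
  have hDvWdiff : ∀ v : ℝ × ℝ × ℝ, DifferentiableAt ℝ (Dv W v) p0 := by
    intro v
    have h1 : ContDiffOn ℝ 1 (fderiv ℝ W) U0 := hWU0.fderiv_of_isOpen hU0open (by norm_num)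
    exact ((h1.contDiffAt (hU0open.mem_nhds hp0U0)).differentiableAt one_ne_zero).clm_apply
      (differentiableAt_const v)
  have hsecond : ∀ (v : ℝ × ℝ × ℝ) (η : ℝ × ℝ × ℝ → ℝ),
      (∀ p : ℝ × ℝ × ℝ, Dv (fun q : ℝ × ℝ × ℝ => M * Real.cos (γ * q.2.2)) v p = η p) →
      DifferentiableAt ℝ η p0 →
      Dv (Dv (fun q : ℝ × ℝ × ℝ => M * Real.cos (γ * q.2.2) - W q) v) v p0
        = Dv η v p0 - Dv (Dv W v) v p0 := by
    intro v η hη hηd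
    have hev : Dv (fun q : ℝ × ℝ × ℝ => M * Real.cos (γ * q.2.2) - W q) v
        =ᶠ[nhds p0] fun p => η p - Dv W v p := by
      filter_upwards [hU0open.mem_nhds hp0U0] with p hp
      rw [hGv v p hp, hη p]
    show fderiv ℝ (Dv (fun q : ℝ × ℝ × ℝ => M * Real.cos (γ * q.2.2) - W q) v) p0 v = _
    rw [hev.fderiv_eq, fderiv_fun_sub hηd (hDvWdiff v)]
    simp [Dv]
  -- apply dir_min to the three directions
  obtain ⟨hA1, hA2⟩ := dir_min hGC hGmin (1, 0, 0)
  obtain ⟨hB1, hB2⟩ := dir_min hGC hGmin (1, 1, 0)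
  obtain ⟨hC1, hC2⟩ := dir_min hGC hGmin (0, 0, 1)
  -- first derivative in s vanishes
  have hW1e1 : Dv W (1, 0, 0) p0 = 0 := by
    have h1 := hGv (1, 0, 0) p0 hp0U0
    rw [hA1] at h1
    have h2 := hDh (1, 0, 0) p0
    simp only [show ((1 : ℝ), (0 : ℝ), (0 : ℝ)).2.2 = 0 from rfl, mul_zero] at h2
    rw [h2] at h1
    linarith
  -- second derivatives
  have hzero : ∀ v : ℝ × ℝ × ℝ, Dv (fun _ : ℝ × ℝ × ℝ => (0 : ℝ)) v p0 = 0 := by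
    intro v
    rw [Dv, fderiv_fun_const]
    simp
  have hA2' : Dv (Dv W (1, 0, 0)) (1, 0, 0) p0 ≤ 0 := by
    have h1 := hsecond (1, 0, 0) (fun _ => (0 : ℝ))
      (fun p => by rw [hDh]; norm_num) (differentiableAt_const 0)
    rw [h1, hzero] at hA2
    linarith
  have hB2' : Dv (Dv W (1, 1, 0)) (1, 1, 0) p0 ≤ 0 := by
    have h1 := hsecond (1, 1, 0) (fun _ => (0 : ℝ))
      (fun p => by rw [hDh]; norm_num) (differentiableAt_const 0)
    rw [h1, hzero] at hB2
    linarith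
  have hηdiff : DifferentiableAt ℝ (fun q : ℝ × ℝ × ℝ => -(M * γ) * Real.sin (γ * q.2.2)) p0 := by
    apply DifferentiableAt.const_mul
    exact (Real.differentiable_sin.comp
      ((differentiable_const γ).mul (differentiable_snd.comp differentiable_snd))).differentiableAt
  have hC2' : Dv (Dv W (0, 0, 1)) (0, 0, 1) p0 ≤ -(M * γ) * (Real.cos (γ * p0.2.2) * γ) := by
    have h1 := hsecond (0, 0, 1) (fun q : ℝ × ℝ × ℝ => -(M * γ) * Real.sin (γ * q.2.2))
      (fun p => by rw [hDh]; norm_num) hηdiff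
    rw [h1, hDη] at hC2
    simp only [show ((0 : ℝ), (0 : ℝ), (1 : ℝ)).2.2 = 1 from rfl, mul_one] at hC2
    linarith
  -- the PDE at p0
  have hpde0 := hpde p0.1 p0.2 hp0Ω
  have hp0eta : (p0.1, p0.2.1, p0.2.2) = p0 := by simp
  rw [hp0eta] at hpde0
  rw [Leps, hW1e1] at hpde0
  simp only [mul_zero, neg_zero, zero_sub, neg_eq_zero] at hpde0
  -- hpde0 : B + C + ε * A = 0
  have hεA : ε * Dv (Dv W (1, 0, 0)) (1, 0, 0) p0 ≤ 0 :=
    mul_nonpos_of_nonneg_of_nonpos hε hA2'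
  have hkey2 : 0 < M * γ * (Real.cos (γ * p0.2.2) * γ) :=
    mul_pos (mul_pos hMpos hγpos) (mul_pos hψ0pos hγpos)
  nlinarith [hkey2, hB2', hC2', hεA, hpde0]

/-- Liouville-type statement: a solution of `−c ∂_s W − L_ε W = 0` with Dirichlet,
periodicity, square-integrability and uniform decay conditions vanishes identically. -/
theorem stmt_4 (lam ℓ : ℝ) (hlam : 0 < lam) (hℓ : 0 < ℓ)
    (Ω : Set (ℝ × ℝ)) (hΩopen : IsOpen Ω)
    (hΩsub : Ω ⊆ (univ : Set ℝ) ×ˢ Ioo (-lam) lam)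
    (hΩper : ∀ q : ℝ × ℝ, q ∈ Ω ↔ (q.1 + ℓ, q.2) ∈ Ω)
    (ε c : ℝ) (hε : ε ∈ Icc (0 : ℝ) (1 / 2))
    (W : ℝ × ℝ × ℝ → ℝ)
    (hWreg : ContDiffOn ℝ 2 W ((univ : Set ℝ) ×ˢ closure Ω))
    (hWper : ∀ s x z : ℝ, W (s, x + ℓ, z) = W (s, x, z))
    (hWbd : ∀ s : ℝ, ∀ q ∈ frontier Ω, W (s, q.1, q.2) = 0)
    (hW0 : IntegrableOn (fun p => (W p) ^ 2)
      ((univ : Set ℝ) ×ˢ {q ∈ Ω | 0 < q.1 ∧ q.1 < ℓ}) volume)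
    (hW1 : ∀ v : ℝ × ℝ × ℝ, IntegrableOn (fun p => (Dv W v p) ^ 2)
      ((univ : Set ℝ) ×ˢ {q ∈ Ω | 0 < q.1 ∧ q.1 < ℓ}) volume)
    (hWdecay : ∀ δ : ℝ, 0 < δ → ∃ R : ℝ, ∀ s : ℝ, R ≤ |s| →
      ∀ q ∈ closure Ω, |W (s, q.1, q.2)| ≤ δ)
    (hWdecay1 : ∀ v : ℝ × ℝ × ℝ, ∀ δ : ℝ, 0 < δ → ∃ R : ℝ, ∀ s : ℝ, R ≤ |s| →
      ∀ q ∈ closure Ω, |Dv W v (s, q.1, q.2)| ≤ δ)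
    (hpde : ∀ s : ℝ, ∀ q ∈ Ω,
      -c * Dv W (1, 0, 0) (s, q.1, q.2) - Leps ε W (s, q.1, q.2) = 0) :
    ∀ s : ℝ, ∀ q ∈ closure Ω, W (s, q.1, q.2) = 0 := by
  intro s q hq
  have h1 := key lam ℓ hlam hℓ Ω hΩopen hΩsub hΩper ε c hε.1 W hWreg hWper hWbd hWdecay hpde
    s q hq
  -- apply `key` to `-W`
  have hDvneg : ∀ (f : ℝ × ℝ × ℝ → ℝ) (v : ℝ × ℝ × ℝ),
      Dv (fun p => -f p) v = fun p => -(Dv f v p) := by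
    intro f v
    funext p
    show fderiv ℝ (fun p => -f p) p v = -(fderiv ℝ f p v)
    rw [fderiv_fun_neg]
    simp
  have hpde' : ∀ s : ℝ, ∀ q ∈ Ω,
      -c * Dv (fun p => -W p) (1, 0, 0) (s, q.1, q.2)
        - Leps ε (fun p => -W p) (s, q.1, q.2) = 0 := by
    intro s' q' hq'
    have h0 := hpde s' q' hq'
    simp only [Leps] at h0 ⊢
    rw [hDvneg W (1, 1, 0), hDvneg W (0, 0, 1), hDvneg W (1, 0, 0),
      hDvneg (Dv W (1, 1, 0)) (1, 1, 0), hDvneg (Dv W (0, 0, 1)) (0, 0, 1),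
      hDvneg (Dv W (1, 0, 0)) (1, 0, 0)]
    simp only
    linarith
  have h2 := key lam ℓ hlam hℓ Ω hΩopen hΩsub hΩper ε c hε.1 (fun p => -W p) hWreg.neg
    (fun s x z => by simp [hWper s x z])
    (fun s q hq => by simp [hWbd s q hq])
    (fun δ hδ => by
      obtain ⟨R, hR⟩ := hWdecay δ hδ
      exact ⟨R, fun s hs q hq => by simpa using hR s hs q hq⟩)
    hpde' s q hq
  linarith
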